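/- Let $(\Omega, \mathcal{F})$ be a measurable space, $\mathcal{H}_1, \mathcal{H}_2 \subseteq \mathcal{F}$ two sub-sigma-algebras, and $X : \Omega \to \mathbb{R}$ a function. Then $X$ is $\sigma(\mathcal{H}_1 \cup \mathcal{H}_2)$-measurable if and only if there exist a Borel measurable function $h : [0,1]^2 \to \mathbb{R}$ and functions $Y_1, Y_2 : \Omega \to [0,1]$ with $Y_i$ being $\mathcal{H}_i$-measurable for $i \in \{1,2\}$, such that $X = h(Y_1, Y_2)$. -/

import Mathlib

open MeasureTheory MeasurableSpace Set

lemma aux_not_countable_cantor : ¬ Countable (ℕ → Bool) := by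
  intro h
  obtain ⟨f, -, finj⟩ := measurable_injection_nat_bool_of_countablySeparated ℝ
  exact not_countable (α := ℝ) finj.countable

lemma aux_not_countable_unitInterval : ¬ Countable unitInterval := by
  intro h
  have h2 : (Cardinal.mk unitInterval) ≤ Cardinal.aleph0 := Cardinal.mk_le_aleph0
  rw [show (Cardinal.mk unitInterval) = Cardinal.continuum from
    Cardinal.mk_Icc_real zero_lt_one] at h2
  exact Cardinal.aleph0_lt_continuum.2 h2

/-- every set in a generated σ-algebra is generated by a countable subfamily -/
lemma aux_countable_generateFrom {α : Type*} {U : Set (Set α)} {s : Set α}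
    (hs : MeasurableSet[MeasurableSpace.generateFrom U] s) :
    ∃ T : Set (Set α), T ⊆ U ∧ T.Countable ∧
      MeasurableSet[MeasurableSpace.generateFrom T] s := by
  have hs' : MeasurableSpace.GenerateMeasurable U s := hs
  clear hs
  induction hs' with
  | basic t ht => exact ⟨{t}, singleton_subset_iff.2 ht, countable_singleton t,
      measurableSet_generateFrom (mem_singleton t)⟩
  | empty => exact ⟨∅, empty_subset _, countable_empty, @MeasurableSet.empty _ (generateFrom ∅)⟩
  | compl t ht IH =>
    obtain ⟨T, hTU, hTc, hT⟩ := IH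
    exact ⟨T, hTU, hTc, hT.compl⟩
  | iUnion f hf IH =>
    choose T hTU hTc hT using IH
    refine ⟨⋃ n, T n, iUnion_subset hTU, countable_iUnion hTc,
      MeasurableSet.iUnion fun n => ?_⟩
    exact generateFrom_mono (subset_iUnion T n) _ (hT n)

/-- Doob–Dynkin type factorization through an arbitrary map. -/
lemma aux_factor {Ω β : Type*} [mβ : MeasurableSpace β] {g : Ω → β} {X : Ω → ℝ}
    (hX : Measurable[mβ.comap g] X) :
    ∃ h : β → ℝ, Measurable h ∧ ∀ ω, X ω = h (g ω) := by
  classical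
  let e : ℝ ≃ᵐ (ℕ → Bool) :=
    PolishSpace.measurableEquivOfNotCountable (not_countable (α := ℝ)) aux_not_countable_cantor
  have hf : Measurable[mβ.comap g] fun ω => e (X ω) := e.measurable.comp hX
  have hcoord : ∀ n, ∃ B : Set β, MeasurableSet B ∧
      g ⁻¹' B = {ω | e (X ω) n = true} := by
    intro n
    have h1 : Measurable[mβ.comap g] fun ω => e (X ω) n :=
      (measurable_pi_apply n).comp hf
    have h2 : MeasurableSet[mβ.comap g] ((fun ω => e (X ω) n) ⁻¹' {true}) :=
      h1 (measurableSet_singleton true)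
    obtain ⟨B, hB, hBeq⟩ := MeasurableSpace.measurableSet_comap.mp h2
    exact ⟨B, hB, by simpa [Set.preimage] using hBeq⟩
  choose B hB hBeq using hcoord
  let k : β → ℕ → Bool := fun b n => decide (b ∈ B n)
  have hk : Measurable k := by
    rw [measurable_pi_iff]
    intro n
    apply measurable_to_bool
    have heq : (fun b => k b n) ⁻¹' {true} = B n := by
      ext b; simp [k]
    rw [heq]
    exact hB n
  refine ⟨fun b => e.symm (k b), e.symm.measurable.comp hk, fun ω => ?_⟩
  have hmemiff : ∀ n, g ω ∈ B n ↔ e (X ω) n = true := by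
    intro n
    constructor
    · intro hmem
      have h3 : ω ∈ g ⁻¹' B n := hmem
      rw [hBeq n] at h3; exact h3
    · intro ht
      have h3 : ω ∈ g ⁻¹' B n := by rw [hBeq n]; exact ht
      exact h3
  have hkg : k (g ω) = e (X ω) := by
    funext n
    by_cases hmem : g ω ∈ B n
    · simp only [k, hmem, decide_true]
      exact ((hmemiff n).mp hmem).symm
    · simp only [k, hmem, decide_false]
      exact (Bool.eq_false_iff.mpr fun ht => hmem ((hmemiff n).mpr ht)).symm
  show X ω = e.symm (k (g ω))
  rw [hkg, e.symm_apply_apply]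

/-- a countably generated sub-σ-algebra is induced by a map to `[0,1]`. -/
lemma aux_encode {Ω : Type*} (m : MeasurableSpace Ω) [h : @CountablyGenerated Ω m] :
    ∃ Y : Ω → unitInterval, Measurable[m] Y ∧
      m ≤ MeasurableSpace.comap Y inferInstance := by
  classical
  let e : (ℕ → Bool) ≃ᵐ unitInterval :=
    PolishSpace.measurableEquivOfNotCountable aux_not_countable_cantor
      aux_not_countable_unitInterval
  let f : Ω → ℕ → Bool := @MeasurableSpace.mapNatBool Ω m h
  have hf : Measurable[m] f := @MeasurableSpace.measurable_mapNatBool Ω m h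
  have hle : m ≤ MeasurableSpace.comap f inferInstance := by
    refine le_trans (le_of_eq (@MeasurableSpace.generateFrom_natGeneratingSequence Ω m h).symm)
      (generateFrom_le ?_)
    rintro - ⟨n, rfl⟩
    refine MeasurableSpace.measurableSet_comap.mpr ⟨{y | y n = true}, ?_, ?_⟩
    · have hrw : {y : ℕ → Bool | y n = true} = (fun y : ℕ → Bool => y n) ⁻¹' {true} := rfl
      rw [hrw]
      exact (measurable_pi_apply n) (measurableSet_singleton true)
    · ext x
      simp [f, MeasurableSpace.mapNatBool, Set.preimage]
  refine ⟨fun ω => e (f ω), e.measurable.comp hf, ?_⟩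
  have hcomap : MeasurableSpace.comap (fun ω => e (f ω)) inferInstance
      = MeasurableSpace.comap f inferInstance := by
    rw [show (fun ω => e (f ω)) = (e : (ℕ → Bool) → unitInterval) ∘ f from rfl,
      ← MeasurableSpace.comap_comp, e.measurableEmbedding.comap_eq]
  rw [hcomap]
  exact hle

/-- X : Ω → ℝ is σ(ℋ₁ ∪ ℋ₂)-measurable iff X = h(Y₁, Y₂) with
h : [0,1]² → ℝ Borel and Yᵢ ℋᵢ-measurable. -/
theorem stmt_3 {Ω : Type*} [F : MeasurableSpace Ω]
    (H1 H2 : MeasurableSpace Ω) (hH1 : H1 ≤ F) (hH2 : H2 ≤ F) (X : Ω → ℝ) :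
    Measurable[H1 ⊔ H2] X ↔
      ∃ (h : unitInterval × unitInterval → ℝ) (Y1 Y2 : Ω → unitInterval),
        Measurable h ∧ Measurable[H1] Y1 ∧ Measurable[H2] Y2 ∧
        ∀ ω, X ω = h (Y1 ω, Y2 ω) := by
  constructor
  · intro hX
    -- countable generating subfamilies
    have hsup : H1 ⊔ H2 = MeasurableSpace.generateFrom
        ({s | MeasurableSet[H1] s} ∪ {s | MeasurableSet[H2] s}) := by
      have h0 := generateFrom_sup_generateFrom
        (s := {s | MeasurableSet[H1] s}) (t := {s | MeasurableSet[H2] s})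
      rw [@generateFrom_measurableSet Ω H1, @generateFrom_measurableSet Ω H2] at h0
      exact h0.symm ▸ h0
    have hQ : ∀ q : ℚ, ∃ T : Set (Set Ω),
        T ⊆ ({s | MeasurableSet[H1] s} ∪ {s | MeasurableSet[H2] s}) ∧ T.Countable ∧
        MeasurableSet[MeasurableSpace.generateFrom T] (X ⁻¹' Iio (q : ℝ)) := by
      intro q
      apply aux_countable_generateFrom
      rw [← hsup]
      exact hX measurableSet_Iio
    choose T hTsub hTcnt hTmeas using hQ
    set T1 : Set (Set Ω) := (⋃ q : ℚ, T q) ∩ {s | MeasurableSet[H1] s} with hT1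
    set T2 : Set (Set Ω) := (⋃ q : ℚ, T q) ∩ {s | MeasurableSet[H2] s} with hT2
    set m1 := MeasurableSpace.generateFrom T1 with hm1
    set m2 := MeasurableSpace.generateFrom T2 with hm2
    have hm1le : m1 ≤ H1 := generateFrom_le fun s hs => hs.2
    have hm2le : m2 ≤ H2 := generateFrom_le fun s hs => hs.2
    haveI hcg1 : @CountablyGenerated Ω m1 :=
      @CountablyGenerated.mk Ω m1 ⟨T1, ((countable_iUnion hTcnt).mono inter_subset_left), hm1⟩
    haveI hcg2 : @CountablyGenerated Ω m2 :=
      @CountablyGenerated.mk Ω m2 ⟨T2, ((countable_iUnion hTcnt).mono inter_subset_left), hm2⟩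
    -- X is m1 ⊔ m2 measurable
    have hXm : Measurable[m1 ⊔ m2] X := by
      have key : ∀ q : ℚ, MeasurableSet[m1 ⊔ m2] (X ⁻¹' Iio (q : ℝ)) := by
        intro q
        have h1 : MeasurableSpace.generateFrom (T q) ≤ m1 ⊔ m2 := by
          rw [hm1, hm2, generateFrom_sup_generateFrom]
          apply generateFrom_mono
          intro s hs
          rcases hTsub q hs with h | h
          · exact Or.inl ⟨mem_iUnion.mpr ⟨q, hs⟩, h⟩
          · exact Or.inr ⟨mem_iUnion.mpr ⟨q, hs⟩, h⟩
        exact h1 _ (hTmeas q)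
      have h2 : @Measurable Ω ℝ (m1 ⊔ m2)
          (MeasurableSpace.generateFrom (⋃ a : ℚ, {Iio (a : ℝ)})) X := by
        apply @measurable_generateFrom Ω ℝ (m1 ⊔ m2)
        intro t ht
        simp only [mem_iUnion, mem_singleton_iff] at ht
        obtain ⟨q, rfl⟩ := ht
        exact key q
      rw [← Real.borel_eq_generateFrom_Iio_rat] at h2
      exact h2
    obtain ⟨Y1, hY1meas, hY1le⟩ := aux_encode m1
    obtain ⟨Y2, hY2meas, hY2le⟩ := aux_encode m2
    set g : Ω → unitInterval × unitInterval := fun ω => (Y1 ω, Y2 ω) with hg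
    have hgle : m1 ⊔ m2 ≤ MeasurableSpace.comap g inferInstance := by
      apply sup_le
      · refine le_trans hY1le ?_
        have h3 : Y1 = Prod.fst ∘ g := rfl
        rw [h3, ← MeasurableSpace.comap_comp]
        exact MeasurableSpace.comap_mono measurable_fst.comap_le
      · refine le_trans hY2le ?_
        have h3 : Y2 = Prod.snd ∘ g := rfl
        rw [h3, ← MeasurableSpace.comap_comp]
        exact MeasurableSpace.comap_mono measurable_snd.comap_le
    have hXg : Measurable[MeasurableSpace.comap g inferInstance] X :=
      hXm.mono hgle le_rfl
    obtain ⟨h, hh, hfac⟩ := aux_factor hXg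
    exact ⟨h, Y1, Y2, hh, hY1meas.mono hm1le le_rfl, hY2meas.mono hm2le le_rfl,
      fun ω => hfac ω⟩
  · rintro ⟨h, Y1, Y2, hh, hY1, hY2, hXeq⟩
    have hXfun : X = fun ω => h (Y1 ω, Y2 ω) := funext hXeq
    rw [hXfun]
    exact hh.comp ((hY1.mono le_sup_left le_rfl).prodMk (hY2.mono le_sup_right le_rfl))
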